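/- arXiv:1308.0838 — 2 statements merged into one kernel-verified Lean document; each statement's English description precedes it below -/
import Mathlib

section
/- For every C > 0 and every ε > 0 there is a constant C' > 0, independent of the field F, such that for every integer n ≥ 1 the number of elements x ∈ O_F with |N_{F/ℚ}(x)| = n and |σ(x)| ≤ C·n^{1/3} for every field embedding σ : F → ℂ is at most C'·n^{ε}. -/
/-- (3v+1)^3 ≤ 64^v for v ≥ 1 (naturals). -/
lemma pow64 : ∀ v : ℕ, 1 ≤ v → (3*v+1)^3 ≤ 64^v := by
  intro v hv
  induction v with
  | zero => omega
  | succ w ih =>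
    rcases Nat.eq_or_lt_of_le hv with h | h
    · simp [← h]
    · have hw : 1 ≤ w := by omega
      have h1 : (3*(w+1)+1)^3 ≤ 64 * (3*w+1)^3 := by zify; nlinarith [sq_nonneg (w:ℤ), Int.natCast_nonneg w]
      calc (3*(w+1)+1)^3 ≤ 64 * (3*w+1)^3 := h1
        _ ≤ 64 * 64^w := by have := ih hw; omega
        _ = 64^(w+1) := by ring

/-- geometric domination: (3v+1)^3 ≤ A * (2^ε)^v. -/
lemma geom_dom (ε : ℝ) (hε : 0 < ε) :
    ∃ A : ℝ, 1 ≤ A ∧ ∀ v : ℕ, ((3*v+1 : ℕ) : ℝ)^3 ≤ A * ((2:ℝ) ^ ε) ^ v := by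
  set r : ℝ := (2:ℝ) ^ ε with hr
  have hr1 : 1 < r := Real.one_lt_rpow (by norm_num) hε
  have hr0 : 0 < r := lt_trans one_pos hr1
  set s : ℝ := r⁻¹ with hs
  have hs1 : s < 1 := inv_lt_one_of_one_lt₀ hr1
  have hs0 : 0 < s := inv_pos.mpr hr0
  have htend : Filter.Tendsto (fun v : ℕ => (v:ℝ)^3 * s^v) Filter.atTop (nhds 0) :=
    tendsto_pow_const_mul_const_pow_of_lt_one 3 hs0.le hs1
  obtain ⟨M, hM⟩ := htend.bddAbove_range
  have hMmem : ∀ v : ℕ, (v:ℝ)^3 * s^v ≤ M := fun v => hM (Set.mem_range_self v)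
  refine ⟨max 1 (64*M), le_max_left _ _, fun v => ?_⟩
  rcases Nat.eq_zero_or_pos v with rfl | hv
  · simp only [Nat.mul_zero, Nat.zero_add, Nat.cast_one, one_pow, pow_zero, mul_one]
    exact le_max_left _ _
  · have h1 : ((3*v+1 : ℕ) : ℝ)^3 ≤ 64 * (v:ℝ)^3 := by
      have hb : ((3*v+1 : ℕ) : ℝ) ≤ 4*(v:ℝ) := by
        push_cast
        have : (1:ℝ) ≤ (v:ℝ) := by exact_mod_cast hv
        linarith
      calc ((3*v+1 : ℕ) : ℝ)^3 ≤ (4*(v:ℝ))^3 := pow_le_pow_left₀ (by positivity) hb 3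
        _ = 64 * (v:ℝ)^3 := by ring
    have h2 : (v:ℝ)^3 = ((v:ℝ)^3 * s^v) * r^v := by
      rw [mul_assoc, hs, inv_pow, inv_mul_cancel₀ (by positivity), mul_one]
    calc ((3*v+1 : ℕ) : ℝ)^3 ≤ 64 * (v:ℝ)^3 := h1
      _ = 64 * ((v:ℝ)^3 * s^v) * r^v := by rw [mul_assoc, ← h2]
      _ ≤ 64 * M * r^v := by
          apply mul_le_mul_of_nonneg_right _ (by positivity)
          have := hMmem v; nlinarith
      _ ≤ max 1 (64*M) * r^v := by
          apply mul_le_mul_of_nonneg_right (le_max_right _ _) (by positivity)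

open Finset in
/-- The divisor-type bound, uniform version. -/
lemma divbound (ε : ℝ) (hε : 0 < ε) :
    ∃ C₀ : ℝ, 0 < C₀ ∧ ∀ n : ℕ, 1 ≤ n →
      (∏ p ∈ n.primeFactors, ((3 * n.factorization p + 1 : ℕ) : ℝ)^3)
        ≤ C₀ * (n:ℝ) ^ ε := by
  obtain ⟨A, hA1, hA⟩ := geom_dom ε hε
  set P₀ : ℕ := ⌈(64:ℝ) ^ (ε⁻¹)⌉₊ with hP₀
  refine ⟨A ^ (P₀+1), by positivity, fun n hn => ?_⟩
  have hn0 : n ≠ 0 := by omega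
  -- pointwise bound
  have key : ∀ p ∈ n.primeFactors,
      ((3 * n.factorization p + 1 : ℕ) : ℝ)^3
        ≤ (if p ≤ P₀ then A else 1) * (((p:ℝ) ^ (n.factorization p : ℕ)) ^ ε) := by
    intro p hp
    have hpprime : p.Prime := Nat.prime_of_mem_primeFactors hp
    have hp2 : (2:ℝ) ≤ (p:ℝ) := by exact_mod_cast hpprime.two_le
    have hv1 : 1 ≤ n.factorization p := by
      have := Nat.Prime.factorization_pos_of_dvd hpprime hn0 (Nat.dvd_of_mem_primeFactors hp)
      omega
    set v := n.factorization p with hv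
    have hppos : (0:ℝ) < (p:ℝ) := by linarith
    by_cases hcase : p ≤ P₀
    · simp only [hcase, if_true]
      calc ((3 * v + 1 : ℕ) : ℝ)^3 ≤ A * ((2:ℝ) ^ ε) ^ v := hA v
        _ ≤ A * (((p:ℝ) ^ (v:ℕ)) ^ ε) := by
            apply mul_le_mul_of_nonneg_left _ (by linarith)
            have h1 : ((2:ℝ) ^ ε) ^ v = ((2:ℝ) ^ (v:ℕ)) ^ ε := by
              rw [← Real.rpow_natCast ((2:ℝ)^ε) v, ← Real.rpow_natCast (2:ℝ) v,
                ← Real.rpow_mul (by norm_num), ← Real.rpow_mul (by norm_num), mul_comm]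
            rw [h1]
            apply Real.rpow_le_rpow (by positivity) _ hε.le
            exact pow_le_pow_left₀ (by norm_num) hp2 v
    · simp only [hcase, if_false, one_mul]
      push_neg at hcase
      have hp64 : (64:ℝ) ≤ (p:ℝ) ^ ε := by
        have h1 : ((64:ℝ) ^ (ε⁻¹) : ℝ) ≤ (p:ℝ) := by
          calc ((64:ℝ) ^ (ε⁻¹) : ℝ) ≤ (P₀ : ℝ) := Nat.le_ceil _
            _ ≤ (p:ℝ) := by exact_mod_cast hcase.le
        calc (64:ℝ) = ((64:ℝ) ^ (ε⁻¹)) ^ ε := by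
              rw [← Real.rpow_mul (by norm_num : (0:ℝ) ≤ 64), inv_mul_cancel₀ hε.ne',
                Real.rpow_one]
          _ ≤ (p:ℝ) ^ ε := Real.rpow_le_rpow (by positivity) h1 hε.le
      calc ((3 * v + 1 : ℕ) : ℝ)^3 = (((3 * v + 1)^3 : ℕ) : ℝ) := by push_cast; ring
        _ ≤ ((64^v : ℕ) : ℝ) := by exact_mod_cast pow64 v hv1
        _ = (64:ℝ) ^ (v:ℕ) := by push_cast; ring
        _ ≤ ((p:ℝ) ^ ε) ^ (v:ℕ) := pow_le_pow_left₀ (by norm_num) hp64 v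
        _ = ((p:ℝ) ^ (v:ℕ)) ^ ε := by
            rw [← Real.rpow_natCast ((p:ℝ)^ε) v, ← Real.rpow_natCast (p:ℝ) v,
              ← Real.rpow_mul hppos.le, ← Real.rpow_mul hppos.le, mul_comm]
  -- combine
  have hprod : (∏ p ∈ n.primeFactors, ((3 * n.factorization p + 1 : ℕ) : ℝ)^3)
      ≤ ∏ p ∈ n.primeFactors,
        ((if p ≤ P₀ then A else 1) * (((p:ℝ) ^ (n.factorization p : ℕ)) ^ ε)) :=
    Finset.prod_le_prod (fun p _ => by positivity) key
  rw [Finset.prod_mul_distrib] at hprod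
  have hfac : ∏ p ∈ n.primeFactors, ((p:ℝ) ^ (n.factorization p : ℕ)) ^ ε = (n:ℝ) ^ ε := by
    rw [Real.finset_prod_rpow _ _ (fun p _ => by positivity)]
    congr 1
    have h1 : ∏ p ∈ n.primeFactors, (p:ℝ) ^ (n.factorization p : ℕ)
        = ((∏ p ∈ n.primeFactors, p ^ (n.factorization p) : ℕ) : ℝ) := by push_cast; ring
    rw [h1]
    congr 1
    rw [← Nat.support_factorization]
    exact Nat.factorization_prod_pow_eq_self hn0
  have hifs : (∏ p ∈ n.primeFactors, (if p ≤ P₀ then A else 1)) ≤ A ^ (P₀+1) := by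
    classical
    rw [Finset.prod_ite, Finset.prod_const, Finset.prod_const, one_pow, mul_one]
    have hcard : (n.primeFactors.filter (fun p => p ≤ P₀)).card ≤ P₀ + 1 := by
      have hsub : n.primeFactors.filter (fun p => p ≤ P₀) ⊆ Finset.range (P₀+1) := by
        intro p hp
        simp only [Finset.mem_filter] at hp
        exact Finset.mem_range.mpr (by omega)
      calc _ ≤ (Finset.range (P₀+1)).card := Finset.card_le_card hsub
        _ = P₀ + 1 := Finset.card_range _
    exact pow_le_pow_right₀ hA1 hcard
  calc (∏ p ∈ n.primeFactors, ((3 * n.factorization p + 1 : ℕ) : ℝ)^3)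
      ≤ (∏ p ∈ n.primeFactors, (if p ≤ P₀ then A else 1))
        * ∏ p ∈ n.primeFactors, ((p:ℝ) ^ (n.factorization p : ℕ)) ^ ε := hprod
    _ ≤ A ^ (P₀+1) * (n:ℝ) ^ ε := by
        rw [hfac]
        apply mul_le_mul_of_nonneg_right hifs (by positivity)

open NumberField Polynomial

/-- Uniform Northcott-type count for cubic fields: the number of algebraic integers with all
conjugates bounded by `B` is at most a constant depending only on `B`. -/
lemma north (B : ℝ) (hB : 1 ≤ B) :
    ∃ K : ℕ, 0 < K ∧ ∀ (F : Type) (_ : Field F) (_ : NumberField F),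
      Module.finrank ℚ F = 3 →
      ∀ s : Finset F, (∀ x ∈ s, IsIntegral ℤ x ∧ ∀ φ : F →+* ℂ, ‖φ x‖ ≤ B) →
      s.card ≤ K := by
  classical
  set M : ℕ := ⌈B^3 * 3⌉₊ with hM
  refine ⟨3 * (2*M+1)^4, by positivity, ?_⟩
  rintro F _ _ h3 s hs
  set g : F → (Fin 4 → ℤ) := fun x i => (minpoly ℤ x).coeff i with hg
  -- coefficient bounds
  have hcoeff : ∀ x ∈ s, ∀ i : ℕ, |(minpoly ℤ x).coeff i| ≤ (M:ℤ) := by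
    intro x hxs i
    obtain ⟨hxint, hxbd⟩ := hs x hxs
    have hbd : ‖(minpoly ℚ x).coeff i‖ ≤ max B 1 ^ Module.finrank ℚ F *
        (Module.finrank ℚ F).choose (Module.finrank ℚ F / 2) := by
      apply NumberField.Embeddings.coeff_bdd_of_norm_le (A := ℂ)
      intro φ; exact hxbd φ
    rw [h3] at hbd
    have hmax : max B 1 = B := max_eq_left hB
    rw [hmax] at hbd
    have hch : (Nat.choose 3 (3/2) : ℝ) = 3 := by norm_num
    have hbd' : ‖(minpoly ℚ x).coeff i‖ ≤ B^3 * 3 := by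
      calc ‖(minpoly ℚ x).coeff i‖ ≤ B ^ 3 * (Nat.choose 3 (3/2)) := by exact_mod_cast hbd
        _ = B^3 * 3 := by rw [hch]
    have heq := minpoly.isIntegrallyClosed_eq_field_fractions' ℚ hxint
    rw [heq, coeff_map, eq_intCast, Int.norm_cast_rat, Int.norm_eq_abs] at hbd'
    have : (|(minpoly ℤ x).coeff i| : ℝ) ≤ (M:ℝ) := le_trans (by exact_mod_cast hbd')
      (Nat.le_ceil _)
    exact_mod_cast this
  -- degree bound
  have hdeg : ∀ x ∈ s, (minpoly ℤ x).natDegree ≤ 3 := by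
    intro x hxs
    obtain ⟨hxint, -⟩ := hs x hxs
    have heq := minpoly.isIntegrallyClosed_eq_field_fractions' ℚ hxint
    have h1 : (minpoly ℚ x).natDegree ≤ 3 := by
      have := minpoly.natDegree_le (A := ℚ) x
      rwa [h3] at this
    rwa [heq, (minpoly.monic hxint).natDegree_map] at h1
  -- monic
  have hmonic : ∀ x ∈ s, (minpoly ℤ x).Monic := fun x hxs => minpoly.monic (hs x hxs).1
  -- fibers have at most 3 elements
  have hfib : ∀ a ∈ s.image g, (s.filter fun x => g x = a).card ≤ 3 := by
    intro a ha
    obtain ⟨x₀, hx₀s, hx₀⟩ := Finset.mem_image.mp ha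
    set P : ℤ[X] := minpoly ℤ x₀ with hP
    have hPmonic : P.Monic := hmonic x₀ hx₀s
    have hkey : ∀ y ∈ s.filter (fun x => g x = a), minpoly ℤ y = P := by
      intro y hy
      rw [Finset.mem_filter] at hy
      obtain ⟨hys, hya⟩ := hy
      apply Polynomial.ext
      intro i
      rcases lt_or_ge i 4 with hi | hi
      · have := congrFun hya ⟨i, hi⟩
        have h2 := congrFun hx₀ ⟨i, hi⟩
        simp only [hg] at this h2
        rw [this, ← h2]
      · rw [coeff_eq_zero_of_natDegree_lt (lt_of_le_of_lt (hdeg y hys) (by omega)),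
          coeff_eq_zero_of_natDegree_lt (lt_of_le_of_lt (hdeg x₀ hx₀s) (by omega))]
    -- all elements of the fiber are roots of P in F
    have hsub : s.filter (fun x => g x = a) ⊆ (P.map (algebraMap ℤ F)).roots.toFinset := by
      intro y hy
      have hyP : minpoly ℤ y = P := hkey y hy
      rw [Finset.mem_filter] at hy
      have hroot : aeval y P = 0 := by rw [← hyP]; exact minpoly.aeval ℤ y
      rw [Multiset.mem_toFinset, mem_roots ((hPmonic.map (algebraMap ℤ F)).ne_zero)]
      rw [IsRoot, eval_map, ← aeval_def, hroot]
    calc (s.filter fun x => g x = a).card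
        ≤ (P.map (algebraMap ℤ F)).roots.toFinset.card := Finset.card_le_card hsub
      _ ≤ Multiset.card (P.map (algebraMap ℤ F)).roots := Multiset.toFinset_card_le _
      _ ≤ (P.map (algebraMap ℤ F)).natDegree := Polynomial.card_roots' _
      _ = P.natDegree := hPmonic.natDegree_map _
      _ ≤ 3 := hdeg x₀ hx₀s
  -- image is contained in a box
  have himg : s.image g ⊆ Fintype.piFinset (fun _ : Fin 4 => Finset.Icc (-(M:ℤ)) (M:ℤ)) := by
    intro a ha
    obtain ⟨x, hxs, hx⟩ := Finset.mem_image.mp ha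
    rw [Fintype.mem_piFinset]
    intro i
    rw [Finset.mem_Icc, ← abs_le]
    rw [← hx]
    exact hcoeff x hxs i
  have hboxcard : (Fintype.piFinset (fun _ : Fin 4 => Finset.Icc (-(M:ℤ)) (M:ℤ))).card
      = (2*M+1)^4 := by
    rw [Fintype.card_piFinset]
    simp only [Int.card_Icc]
    rw [Finset.prod_const, Finset.card_univ, Fintype.card_fin]
    congr 1
    omega
  calc s.card ≤ 3 * (s.image g).card := Finset.card_le_mul_card_image s 3 hfib
    _ ≤ 3 * (2*M+1)^4 := by
        have := Finset.card_le_card himg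
        rw [hboxcard] at this
        omega

open NumberField Ideal UniqueFactorizationMonoid

variable (F : Type) [Field F] [NumberField F]

/-- norm of the ideal generated by a natural number in a cubic field. -/
lemma absNorm_span_natCast (h3 : Module.finrank ℚ F = 3) (m : ℕ) :
    Ideal.absNorm (Ideal.span {(m : 𝓞 F)}) = m ^ 3 := by
  rw [Ideal.absNorm_span_singleton]
  have h1 : (m : 𝓞 F) = algebraMap ℤ (𝓞 F) (m : ℤ) := by push_cast; rfl
  rw [h1, Algebra.norm_algebraMap_of_basis (NumberField.RingOfIntegers.basis F)]
  have hcard : Fintype.card (Module.Free.ChooseBasisIndex ℤ (𝓞 F)) = 3 := by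
    rw [← Module.finrank_eq_card_chooseBasisIndex, NumberField.RingOfIntegers.rank, h3]
  rw [hcard]
  push_cast
  rw [Int.natAbs_pow]
  simp

/-- span of a product of elements -/
lemma span_prod {R : Type*} [CommRing R] {ι : Type*} (S : Finset ι) (f : ι → R) :
    Ideal.span {∏ i ∈ S, f i} = ∏ i ∈ S, Ideal.span {f i} := by
  classical
  induction S using Finset.induction_on with
  | empty => simp [Ideal.one_eq_top]
  | insert _ _ hnotmem ih =>
    rw [Finset.prod_insert hnotmem, Finset.prod_insert hnotmem, ← ih,
      Ideal.span_singleton_mul_span_singleton]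

/-- The number of ideals of `𝓞 F` of norm `n` is at most `∏_{p | n} (3 v_p(n) + 1)^3`. -/
lemma idealcount (h3 : Module.finrank ℚ F = 3) (n : ℕ) (hn : 1 ≤ n)
    (s : Finset (Ideal (𝓞 F))) (hs : ∀ I ∈ s, Ideal.absNorm I = n) :
    s.card ≤ ∏ p ∈ n.primeFactors, (3 * n.factorization p + 1)^3 := by
  classical
  set R := 𝓞 F
  have hn0 : n ≠ 0 := by omega
  have hnR : ((n:ℕ) : R) ≠ 0 := Nat.cast_ne_zero.mpr hn0
  set J : Ideal R := Ideal.span {(n : R)} with hJ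
  have hJ0 : J ≠ 0 := by
    rw [hJ, Ne, Ideal.zero_eq_bot, Ideal.span_singleton_eq_bot]
    exact hnR
  have hNJ : Ideal.absNorm J = n ^ 3 := absNorm_span_natCast F h3 n
  set t : Multiset (Ideal R) := normalizedFactors J with ht
  have htJ : t.prod = J := associated_iff_eq.mp (prod_normalizedFactors hJ0)
  -- each ideal in s divides J
  have hdvdJ : ∀ I ∈ s, I ∣ J := by
    intro I hI
    rw [Ideal.dvd_iff_le, hJ, Ideal.span_singleton_le_iff_mem]
    have := Ideal.absNorm_mem I
    rwa [hs I hI] at this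
  have hI0 : ∀ I ∈ s, I ≠ 0 := by
    intro I hI h0
    have h := hs I hI
    rw [h0, Ideal.zero_eq_bot, Ideal.absNorm_bot] at h
    omega
  -- injection into sub-multiset data
  have hinj : s.card ≤ ∏ P ∈ t.toFinset, (t.count P + 1) := by
    have := Finset.card_le_card_of_injOn
      (f := fun I => (normalizedFactors I).toFinsupp)
      (t := t.toFinset.finsupp (fun P => Finset.range (t.count P + 1)))
      ?_ ?_ (s := s)
    · rw [Finset.card_finsupp] at this
      simpa using this
    · intro I hI
      have hle : normalizedFactors I ≤ t :=
        (dvd_iff_normalizedFactors_le_normalizedFactors (hI0 I hI) hJ0).mp (hdvdJ I hI)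
      rw [Finset.mem_coe, Finset.mem_finsupp_iff]
      constructor
      · intro P hP
        simp only [Multiset.toFinsupp_support] at hP
        rw [Multiset.mem_toFinset] at hP ⊢
        exact Multiset.mem_of_le hle hP
      · intro P _
        rw [Multiset.toFinsupp_apply, Finset.mem_range]
        have := Multiset.count_le_of_le P hle
        omega
    · intro I₁ h₁ I₂ h₂ heq
      have heq' : normalizedFactors I₁ = normalizedFactors I₂ := by
        have := Multiset.toFinsupp.injective heq
        exact this
      have e₁ : (normalizedFactors I₁).prod = I₁ :=
        associated_iff_eq.mp (prod_normalizedFactors (hI0 I₁ h₁))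
      have e₂ : (normalizedFactors I₂).prod = I₂ :=
        associated_iff_eq.mp (prod_normalizedFactors (hI0 I₂ h₂))
      rw [← e₁, ← e₂, heq']
  -- J as a product of spans of primes
  have hJprod : J = ∏ p ∈ n.primeFactors, Ideal.span {(p : R)} ^ (n.factorization p) := by
    have h1 : ∏ p ∈ n.primeFactors, p ^ n.factorization p = n := by
      rw [← Nat.support_factorization]
      exact Nat.factorization_prod_pow_eq_self hn0
    have h2 : ((n:ℕ) : R) = ∏ p ∈ n.primeFactors, ((p:R)) ^ n.factorization p := by
      conv_lhs => rw [← h1]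
      push_cast
      exact (Nat.cast_prod (R := R) _ _).trans (Finset.prod_congr rfl fun p _ => Nat.cast_pow _ _)
    rw [hJ, h2, _root_.span_prod]
    congr 1
    ext p
    rw [Ideal.span_singleton_pow]
  -- every element of t.toFinset divides the span of some prime
  have hex : ∀ P ∈ t.toFinset, ∃ p, p ∈ n.primeFactors ∧ P ∣ Ideal.span {(p : R)} := by
    intro P hP
    rw [Multiset.mem_toFinset] at hP
    have hprime : Prime P := prime_of_normalized_factor P hP
    have hdvd : P ∣ J := dvd_of_mem_normalizedFactors hP
    rw [hJprod] at hdvd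
    obtain ⟨p, hpmem, hpdvd⟩ := Prime.exists_mem_finset_dvd hprime hdvd
    exact ⟨p, hpmem, hprime.dvd_of_dvd_pow hpdvd⟩
  -- choice of the prime
  set θ : Ideal R → ℕ := fun P =>
    if h : ∃ p, p ∈ n.primeFactors ∧ P ∣ Ideal.span {(p : R)} then h.choose else 0 with hθ
  have hθspec : ∀ P ∈ t.toFinset, θ P ∈ n.primeFactors ∧ P ∣ Ideal.span {((θ P : ℕ) : R)} := by
    intro P hP
    have h := hex P hP
    simp only [hθ, h, dif_pos]
    exact h.choose_spec
  -- absNorm of a factor is divisible by its prime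
  have hpdvdN : ∀ P ∈ t.toFinset, (θ P) ∣ Ideal.absNorm P := by
    intro P hP
    obtain ⟨hmem, hdvd⟩ := hθspec P hP
    have hpprime : (θ P).Prime := Nat.prime_of_mem_primeFactors hmem
    have h1 : Ideal.absNorm P ∣ (θ P)^3 := by
      have := map_dvd Ideal.absNorm hdvd
      rwa [absNorm_span_natCast F h3 (θ P)] at this
    have h2 : Ideal.absNorm P ≠ 1 := by
      rw [Ne, Ideal.absNorm_eq_one_iff]
      intro htop
      have : Prime P := prime_of_normalized_factor P (Multiset.mem_toFinset.mp hP)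
      exact this.not_unit (htop ▸ Ideal.isUnit_iff.mpr rfl)
    obtain ⟨k, hk3, hkeq⟩ := (Nat.dvd_prime_pow hpprime).mp h1
    rcases Nat.eq_zero_or_pos k with rfl | hkpos
    · exfalso; apply h2; rw [hkeq]; simp
    · rw [hkeq]
      exact dvd_pow_self _ (by omega)
  -- count bound
  have hcount : ∀ P ∈ t.toFinset, t.count P ≤ 3 * n.factorization (θ P) := by
    intro P hP
    obtain ⟨hmem, hdvd⟩ := hθspec P hP
    have hpprime : (θ P).Prime := Nat.prime_of_mem_primeFactors hmem
    set c := t.count P with hc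
    have h1 : P ^ c ∣ J := by
      have hrep : Multiset.replicate c P ≤ t := Multiset.le_count_iff_replicate_le.mp le_rfl
      have := Multiset.prod_dvd_prod_of_le hrep
      rwa [Multiset.prod_replicate, htJ] at this
    have h2 : Ideal.absNorm P ^ c ∣ n ^ 3 := by
      have := map_dvd Ideal.absNorm h1
      rwa [map_pow, hNJ] at this
    have h3' : (θ P) ^ c ∣ n ^ 3 :=
      dvd_trans (pow_dvd_pow_of_dvd (hpdvdN P hP) c) h2
    have h4 : c ≤ (n^3).factorization (θ P) :=
      (Nat.Prime.pow_dvd_iff_le_factorization hpprime (by positivity)).mp h3'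
    rw [Nat.factorization_pow, Finsupp.smul_apply, smul_eq_mul] at h4
    omega
  -- fiber bound
  have hfiber : ∀ p ∈ n.primeFactors, (t.toFinset.filter (fun P => θ P = p)).card ≤ 3 := by
    intro p hpmem
    have hpprime : p.Prime := Nat.prime_of_mem_primeFactors hpmem
    set Sp := t.toFinset.filter (fun P => θ P = p) with hSp
    have hprimes : ∀ P ∈ Sp, Prime P := by
      intro P hP
      rw [hSp, Finset.mem_filter] at hP
      exact prime_of_normalized_factor P (Multiset.mem_toFinset.mp hP.1)
    have hdvds : ∀ P ∈ Sp, P ∣ Ideal.span {(p : R)} := by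
      intro P hP
      rw [hSp, Finset.mem_filter] at hP
      obtain ⟨h1, h2⟩ := hP
      have := (hθspec P h1).2
      rwa [h2] at this
    have hproddvd : (∏ P ∈ Sp, P) ∣ Ideal.span {(p : R)} :=
      Finset.prod_primes_dvd _ hprimes hdvds
    have hN : (∏ P ∈ Sp, Ideal.absNorm P) ∣ p ^ 3 := by
      have := map_dvd Ideal.absNorm hproddvd
      rwa [map_prod, absNorm_span_natCast F h3 p] at this
    have hple : p ^ Sp.card ∣ p ^ 3 := by
      refine dvd_trans ?_ hN
      have h1 : (∏ _P ∈ Sp, p) ∣ ∏ P ∈ Sp, Ideal.absNorm P := by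
        apply Finset.prod_dvd_prod_of_dvd
        intro P hP
        rw [hSp, Finset.mem_filter] at hP
        obtain ⟨hPt, hPp⟩ := hP
        have := hpdvdN P hPt
        rwa [hPp] at this
      rwa [Finset.prod_const] at h1
    exact (Nat.pow_dvd_pow_iff_le_right hpprime.one_lt).mp hple
  -- assemble
  calc s.card ≤ ∏ P ∈ t.toFinset, (t.count P + 1) := hinj
    _ = ∏ p ∈ n.primeFactors, ∏ P ∈ t.toFinset.filter (fun P => θ P = p), (t.count P + 1) :=
        (Finset.prod_fiberwise_of_maps_to (fun P hP => (hθspec P hP).1) _).symm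
    _ ≤ ∏ p ∈ n.primeFactors, (3 * n.factorization p + 1)^3 := by
        apply Finset.prod_le_prod'
        intro p hp
        calc ∏ P ∈ t.toFinset.filter (fun P => θ P = p), (t.count P + 1)
            ≤ (3 * n.factorization p + 1) ^ (t.toFinset.filter (fun P => θ P = p)).card := by
              apply Finset.prod_le_pow_card
              intro P hP
              rw [Finset.mem_filter] at hP
              have := hcount P hP.1
              rw [hP.2] at this
              omega
          _ ≤ (3 * n.factorization p + 1)^3 :=
              Nat.pow_le_pow_right (by omega) (hfiber p hp)

open NumberField

lemma prodabs (F : Type) [Field F] [NumberField F] (x : F) :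
    ∏ φ : F →+* ℂ, ‖φ x‖ = |((Algebra.norm ℚ x : ℚ) : ℝ)| := by
  have h := Algebra.norm_eq_prod_embeddings ℚ (E := ℂ) (x := x)
  have h2 := congr_arg (‖·‖) h
  rw [norm_prod] at h2
  have h3 : ‖algebraMap ℚ ℂ (Algebra.norm ℚ x)‖ = |((Algebra.norm ℚ x : ℚ) : ℝ)| := by
    rw [show (algebraMap ℚ ℂ) (Algebra.norm ℚ x) = (((Algebra.norm ℚ x : ℚ) : ℝ) : ℂ) by
      push_cast; norm_num]
    rw [Complex.norm_real, Real.norm_eq_abs]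
  rw [h3] at h2
  rw [h2]
  exact Fintype.prod_equiv (RingHom.equivRatAlgHom _ _) (fun φ => ‖φ x‖)
    (fun σ => ‖σ x‖) (fun φ => by simp [RingHom.equivRatAlgHom_apply])

/-- for every `C > 0` and `ε > 0` there is `C' > 0`, independent of the cubic
number field `F`, such that for every `n ≥ 1` the number of `x ∈ O_F` with
`|N_{F/ℚ}(x)| = n` and `|σ(x)| ≤ C·n^{1/3}` for every embedding `σ : F → ℂ` is at most
`C'·n^ε`. -/
theorem statement8 (C : ℝ) (hC : 0 < C) (ε : ℝ) (hε : 0 < ε) :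
    ∃ C' > (0 : ℝ), ∀ (F : Type) (_ : Field F) (_ : NumberField F),
      Module.finrank ℚ F = 3 → ∀ n : ℕ, 1 ≤ n →
      letI Sset : Set (NumberField.RingOfIntegers F) :=
        {x | |Algebra.norm ℚ (x : F)| = (n : ℚ) ∧
          ∀ σ : F →+* ℂ, ‖σ x‖ ≤ C * (n : ℝ) ^ ((1 : ℝ) / 3)}
      Sset.Finite ∧ (Sset.ncard : ℝ) ≤ C' * (n : ℝ) ^ ε := by
  classical
  set C₁ : ℝ := max C 1 with hC₁def
  have hC₁ : 1 ≤ C₁ := le_max_right _ _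
  have hCC₁ : C ≤ C₁ := le_max_left _ _
  have hC₁0 : 0 < C₁ := lt_of_lt_of_le one_pos hC₁
  have hB : 1 ≤ C₁^3 := one_le_pow₀ hC₁
  obtain ⟨K, hK0, hKbd⟩ := north (C₁^3) hB
  obtain ⟨C₀, hC₀, hdiv⟩ := divbound ε hε
  refine ⟨(K:ℝ) * C₀, by positivity, ?_⟩
  rintro F _ _ h3 n hn
  set N : ℝ := (n:ℝ) ^ ((1:ℝ)/3) with hN
  set Sset : Set (NumberField.RingOfIntegers F) :=
    {x | |Algebra.norm ℚ (x : F)| = (n : ℚ) ∧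
      ∀ σ : F →+* ℂ, ‖σ x‖ ≤ C * N} with hSset
  have hn1 : (1:ℝ) ≤ (n:ℝ) := by exact_mod_cast hn
  have hN0 : 0 < N := Real.rpow_pos_of_pos (by linarith) _
  have hN3 : N^(3:ℕ) = (n:ℝ) := by
    rw [hN, ← Real.rpow_natCast ((n:ℝ) ^ ((1:ℝ)/3)) 3, ← Real.rpow_mul (by linarith)]
    norm_num
  -- finiteness
  have hbig := Embeddings.finite_of_norm_le F ℂ (C * N)
  have hfin : Sset.Finite := by
    have hsub : Sset ⊆ (fun x : 𝓞 F => (x : F)) ⁻¹'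
        {x : F | IsIntegral ℤ x ∧ ∀ φ : F →+* ℂ, ‖φ x‖ ≤ C * N} := by
      rintro x ⟨hx1, hx2⟩
      refine ⟨RingOfIntegers.isIntegral_coe x, fun φ => ?_⟩
      exact hx2 φ
    exact Set.Finite.subset (Set.Finite.preimage
      (Set.injOn_of_injective RingOfIntegers.coe_injective) hbig) hsub
  refine ⟨hfin, ?_⟩
  set s : Finset (𝓞 F) := hfin.toFinset with hsdef
  have hmem : ∀ x : 𝓞 F, x ∈ s ↔ x ∈ Sset := fun x => Set.Finite.mem_toFinset hfin
  have hSmem : ∀ x ∈ s, |Algebra.norm ℚ (x : F)| = (n : ℚ) ∧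
      ∀ σ : F →+* ℂ, ‖σ (x:F)‖ ≤ C * N := by
    intro x hx
    exact (hmem x).mp hx
  -- embeddings card
  have hcard3 : Fintype.card (F →+* ℂ) = 3 := by
    rw [Embeddings.card F ℂ, h3]
  -- full product of conjugates equals n
  have hfull : ∀ x ∈ s, ∏ φ : F →+* ℂ, ‖φ (x:F)‖ = (n:ℝ) := by
    intro x hx
    rw [prodabs F ((x:F))]
    rw [show |((Algebra.norm ℚ (x:F) : ℚ) : ℝ)| = ((|Algebra.norm ℚ (x:F)| : ℚ) : ℝ) by
      push_cast; ring]
    rw [(hSmem x hx).1]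
    push_cast; ring
  -- lower bound on conjugates
  have hlow : ∀ x ∈ s, ∀ σ : F →+* ℂ, N / C₁^2 ≤ ‖σ (x:F)‖ := by
    intro x hx σ
    have h1 : ‖σ (x:F)‖ * ∏ φ ∈ Finset.univ.erase σ, ‖φ (x:F)‖
        = (n:ℝ) := by
      rw [Finset.mul_prod_erase Finset.univ (fun φ : F →+* ℂ => ‖φ (x:F)‖)
        (Finset.mem_univ σ)]
      exact hfull x hx
    have hcarde : (Finset.univ.erase σ).card = 2 := by
      rw [Finset.card_erase_of_mem (Finset.mem_univ σ), Finset.card_univ, hcard3]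
    have h2 : ∏ φ ∈ Finset.univ.erase σ, ‖φ (x:F)‖ ≤ (C₁*N)^2 := by
      calc ∏ φ ∈ Finset.univ.erase σ, ‖φ (x:F)‖
          ≤ ∏ _φ ∈ Finset.univ.erase σ, (C₁*N) := by
            apply Finset.prod_le_prod (fun φ _ => norm_nonneg _)
            intro φ _
            calc ‖φ (x:F)‖ ≤ C * N := (hSmem x hx).2 φ
              _ ≤ C₁ * N := by nlinarith
        _ = (C₁*N)^2 := by rw [Finset.prod_const, hcarde]
    set a : ℝ := ‖σ (x:F)‖ with ha
    have ha0 : 0 ≤ a := norm_nonneg _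
    have h4 : (n:ℝ) ≤ a * (C₁*N)^2 := by
      rw [← h1]
      apply mul_le_mul_of_nonneg_left h2 ha0
    rw [div_le_iff₀ (by positivity)]
    have h5 : N * N^2 ≤ (a * C₁^2) * N^2 := by
      have : N^(3:ℕ) = N * N^2 := by ring
      rw [this] at hN3
      rw [hN3]
      calc (n:ℝ) ≤ a * (C₁*N)^2 := h4
        _ = (a * C₁^2) * N^2 := by ring
    exact le_of_mul_le_mul_right h5 (by positivity)
  -- fiber bound
  set f : 𝓞 F → Ideal (𝓞 F) := fun x => Ideal.span {x} with hf
  have hfib : ∀ I ∈ s.image f, (s.filter fun x => f x = I).card ≤ K := by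
    intro I hI
    obtain ⟨x₀, hx₀s, hx₀⟩ := Finset.mem_image.mp hI
    have hx₀ne : (x₀:F) ≠ 0 := by
      intro h0
      have h := (hSmem x₀ hx₀s).1
      rw [h0, Algebra.norm_zero, abs_zero] at h
      have hnq : (n:ℚ) ≠ 0 := by exact_mod_cast (by omega : n ≠ 0)
      exact hnq h.symm
    set T := s.filter (fun x => f x = I) with hT
    set m : 𝓞 F → F := fun y => (y:F) * ((x₀:F))⁻¹ with hm
    have hinj : Set.InjOn m T := by
      intro y₁ _ y₂ _ h
      simp only [hm] at h
      have := mul_right_cancel₀ (inv_ne_zero hx₀ne) h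
      exact RingOfIntegers.ext this
    have hcardT : T.card = (T.image m).card := (Finset.card_image_of_injOn hinj).symm
    have hW : ∀ w ∈ T.image m, IsIntegral ℤ w ∧
        ∀ φ : F →+* ℂ, ‖φ w‖ ≤ C₁^3 := by
      intro w hw
      obtain ⟨y, hyT, hyw⟩ := Finset.mem_image.mp hw
      rw [hT, Finset.mem_filter] at hyT
      obtain ⟨hys, hyI⟩ := hyT
      -- y ∈ span {x₀}
      have hyx₀ : y ∈ Ideal.span ({x₀} : Set (𝓞 F)) := by
        have h' : y ∈ f y := Ideal.mem_span_singleton_self y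
        rw [hyI, ← hx₀] at h'
        exact h'
      obtain ⟨u, hu⟩ := Ideal.mem_span_singleton'.mp hyx₀
      have hwu : w = (u:F) := by
        rw [← hyw]
        show (y:F) * ((x₀:F))⁻¹ = (u:F)
        have hyuf : (y:F) = (u:F) * (x₀:F) := by rw [← hu]; push_cast; ring
        rw [hyuf, mul_inv_cancel_right₀ hx₀ne]
      constructor
      · rw [hwu]; exact RingOfIntegers.isIntegral_coe u
      · intro φ
        have hwval : φ w = φ (y:F) * (φ (x₀:F))⁻¹ := by
          rw [← hyw, hm, _root_.map_mul, map_inv₀]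
        rw [hwval, norm_mul, norm_inv]
        have h1 : ‖φ (y:F)‖ ≤ C₁ * N := by
          calc ‖φ (y:F)‖ ≤ C * N := (hSmem y hys).2 φ
            _ ≤ C₁ * N := by nlinarith
        have h2 : N / C₁^2 ≤ ‖φ (x₀:F)‖ := hlow x₀ hx₀s φ
        have h3' : (‖φ (x₀:F)‖)⁻¹ ≤ C₁^2 / N := by
          rw [← one_div, div_le_div_iff₀ (by
            calc (0:ℝ) < N / C₁^2 := by positivity
              _ ≤ _ := h2) hN0]
          calc 1 * N = N := one_mul N
            _ ≤ C₁^2 * (N / C₁^2) := by field_simp; exact le_rfl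
            _ ≤ C₁^2 * ‖φ (x₀:F)‖ := by nlinarith
        calc ‖φ (y:F)‖ * (‖φ (x₀:F)‖)⁻¹
            ≤ (C₁ * N) * (C₁^2 / N) := by
              apply mul_le_mul h1 h3' (by positivity) (by positivity)
          _ = C₁^3 := by field_simp
    have hKval : (T.image m).card ≤ K := hKbd F inferInstance inferInstance h3 (T.image m) hW
    omega
  have hcardbound : s.card ≤ K * (s.image f).card :=
    Finset.card_le_mul_card_image s K hfib
  -- ideal count
  have hideal : (s.image f).card ≤ ∏ p ∈ n.primeFactors, (3 * n.factorization p + 1)^3 := by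
    apply idealcount F h3 n hn
    intro I hI
    obtain ⟨x, hxs, hxI⟩ := Finset.mem_image.mp hI
    rw [← hxI, hf]
    rw [Ideal.absNorm_span_singleton]
    have h1 : ((Algebra.norm ℤ x).natAbs : ℚ) = ((n:ℕ) : ℚ) := by
      rw [Nat.cast_natAbs, Int.cast_abs, Algebra.coe_norm_int x]
      exact (hSmem x hxs).1
    exact_mod_cast h1
  -- conclusion
  have hncard : Sset.ncard = s.card := Set.ncard_eq_toFinset_card Sset hfin
  rw [hncard]
  have hDreal : ((∏ p ∈ n.primeFactors, (3 * n.factorization p + 1)^3 : ℕ) : ℝ)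
      ≤ C₀ * (n:ℝ)^ε := by
    have := hdiv n hn
    calc ((∏ p ∈ n.primeFactors, (3 * n.factorization p + 1)^3 : ℕ) : ℝ)
        = ∏ p ∈ n.primeFactors, ((3 * n.factorization p + 1 : ℕ) : ℝ)^3 := by push_cast; ring
      _ ≤ C₀ * (n:ℝ)^ε := this
  calc (s.card : ℝ) ≤ (K:ℝ) * ((s.image f).card : ℝ) := by exact_mod_cast hcardbound
    _ ≤ (K:ℝ) * ((∏ p ∈ n.primeFactors, (3 * n.factorization p + 1)^3 : ℕ) : ℝ) := by
        apply mul_le_mul_of_nonneg_left _ (by positivity)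
        exact_mod_cast hideal
    _ ≤ (K:ℝ) * (C₀ * (n:ℝ)^ε) := mul_le_mul_of_nonneg_left hDreal (by positivity)
    _ = (K:ℝ) * C₀ * (n:ℝ)^ε := by ring
end

section
/- Let g ∈ SL_3(ℝ) have Iwasawa decomposition g = n·a·k with n ∈ N, a ∈ A, k ∈ SO(3). Then for all H₁, H₂ ∈ 𝔞, the function s ↦ ⟨H₁, A(g·exp(sH₂))⟩ is differentiable at s = 0 and its derivative there equals ⟨H₁, k H₂ k⁻¹⟩, i.e. (d/ds)|_{s=0} ⟨H₁, A(g exp(sH₂))⟩ = ⟨H₁, Ad(k)H₂⟩. -/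
open scoped Matrix

noncomputable section

/-- Real 3×3 matrices. -/
abbrev M3 : Type := Matrix (Fin 3) (Fin 3) ℝ

/-- `n ∈ N`: upper triangular unipotent. -/
def isUnip (n : M3) : Prop :=
  (∀ i j : Fin 3, (j : ℕ) < (i : ℕ) → n i j = 0) ∧ ∀ i, n i i = 1

/-- `a ∈ A`: diagonal with positive entries and determinant 1. -/
def isPosDiag (a : M3) : Prop :=
  (∀ i j : Fin 3, i ≠ j → a i j = 0) ∧ (∀ i, 0 < a i i) ∧ a.det = 1

/-- `k ∈ K = SO(3)`. -/
def isSO (k : M3) : Prop := k * kᵀ = 1 ∧ k.det = 1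

/-- `H ∈ 𝔞`: traceless diagonal. -/
def isTDiag (H : M3) : Prop :=
  (∀ i j : Fin 3, i ≠ j → H i j = 0) ∧ H.trace = 0

/-- `m ∈ M`: diagonal with `±1` entries and determinant 1 (the centralizer of `A` in `K`). -/
def isMgrp (m : M3) : Prop :=
  (∀ i j : Fin 3, i ≠ j → m i j = 0) ∧ (∀ i, m i i = 1 ∨ m i i = -1) ∧ m.det = 1

/-- The Killing form `⟨X, Y⟩ = 6·tr(XY)` on `sl₃(ℝ)`. -/
def killing (X Y : M3) : ℝ := 6 * (X * Y).trace

/-- `IwaA` is the Iwasawa `𝔞`-coordinate: for every `g ∈ SL₃(ℝ)`, `IwaA g ∈ 𝔞` and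
`g = n·exp(IwaA g)·k` for some `n ∈ N`, `k ∈ SO(3)`. -/
def IsIwasawaA (IwaA : M3 → M3) : Prop :=
  ∀ g : M3, g.det = 1 → isTDiag (IwaA g) ∧
    ∃ n k : M3, isUnip n ∧ isSO k ∧ g = n * NormedSpace.exp (IwaA g) * k

lemma expDiag (H : M3) (h : ∀ i j : Fin 3, i ≠ j → H i j = 0) :
    NormedSpace.exp H = Matrix.diagonal (fun i => Real.exp (H i i)) := by
  have : H = Matrix.diagonal (fun i => H i i) := by
    ext i j
    by_cases hij : i = j
    · subst hij; simp
    · simp [Matrix.diagonal_apply_ne _ hij, h i j hij]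
  rw [this, Matrix.exp_diagonal]
  simp [Real.exp_eq_exp_ℝ, Function.comp]

lemma unipEntries (n Q : M3) (hn : isUnip n) :
    (n * Q * nᵀ) 2 2 = Q 2 2 ∧
    (n * Q * nᵀ) 1 1 * (n * Q * nᵀ) 2 2 - (n * Q * nᵀ) 1 2 * (n * Q * nᵀ) 2 1
      = Q 1 1 * Q 2 2 - Q 1 2 * Q 2 1 := by
  have e10 : n 1 0 = 0 := hn.1 1 0 (by norm_num)
  have e20 : n 2 0 = 0 := hn.1 2 0 (by norm_num)
  have e21 : n 2 1 = 0 := hn.1 2 1 (by norm_num)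
  have e11 : n 1 1 = 1 := hn.2 1
  have e22 : n 2 2 = 1 := hn.2 2
  constructor <;>
    simp [Matrix.mul_apply, Fin.sum_univ_three, Matrix.transpose_apply,
      e10, e20, e21, e11, e22] <;> ring

lemma killingOfDiag (X Y : M3) (hX : ∀ i j : Fin 3, i ≠ j → X i j = 0) :
    killing X Y = 6 * (X 0 0 * Y 0 0 + X 1 1 * Y 1 1 + X 2 2 * Y 2 2) := by
  have e01 : X 0 1 = 0 := hX 0 1 (by decide)
  have e02 : X 0 2 = 0 := hX 0 2 (by decide)
  have e10 : X 1 0 = 0 := hX 1 0 (by decide)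
  have e12 : X 1 2 = 0 := hX 1 2 (by decide)
  have e20 : X 2 0 = 0 := hX 2 0 (by decide)
  have e21 : X 2 1 = 0 := hX 2 1 (by decide)
  simp [killing, Matrix.trace, Matrix.mul_apply, Fin.sum_univ_three,
    Matrix.diag, e01, e02, e10, e12, e20, e21]

lemma keyA (h n' A' k' : M3) (hn' : isUnip n')
    (hA' : ∀ i j : Fin 3, i ≠ j → A' i j = 0)
    (hk' : k' * k'ᵀ = 1) (hd : h = n' * NormedSpace.exp A' * k') :
    (h * hᵀ) 2 2 = Real.exp (2 * A' 2 2) ∧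
    (h * hᵀ) 1 1 * (h * hᵀ) 2 2 - (h * hᵀ) 1 2 * (h * hᵀ) 2 1
      = Real.exp (2 * (A' 1 1 + A' 2 2)) := by
  set D : M3 := Matrix.diagonal (fun i => Real.exp (2 * A' i i)) with hD
  have hhht : h * hᵀ = n' * D * n'ᵀ := by
    subst hd
    rw [expDiag A' hA']
    set e : M3 := Matrix.diagonal (fun i => Real.exp (A' i i)) with he
    have het : eᵀ = e := Matrix.diagonal_transpose _
    have hee : e * e = D := by
      rw [he, hD, Matrix.diagonal_mul_diagonal]
      have hsq : ∀ i : Fin 3, Real.exp (A' i i) * Real.exp (A' i i)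
          = Real.exp (2 * A' i i) := fun i => by rw [← Real.exp_add, two_mul]
      simp [hsq]
    calc n' * e * k' * (n' * e * k')ᵀ
        = n' * e * (k' * k'ᵀ) * eᵀ * n'ᵀ := by
          simp only [Matrix.transpose_mul]; noncomm_ring
      _ = n' * D * n'ᵀ := by rw [hk', het, Matrix.mul_one, Matrix.mul_assoc n' e e, hee]
  have hu := unipEntries n' D hn'
  rw [hhht]
  constructor
  · rw [hu.1, hD]; simp
  · rw [hu.2, hD]
    simp [Matrix.diagonal_apply_ne]
    rw [← Real.exp_add]; ring_nf

/-- if `g = n·a·k` is the Iwasawa decomposition of `g ∈ SL₃(ℝ)`, then for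
`H₁, H₂ ∈ 𝔞` the function `s ↦ ⟨H₁, A(g·exp(sH₂))⟩` is differentiable at `s = 0` with
derivative `⟨H₁, Ad(k)H₂⟩ = ⟨H₁, k H₂ k⁻¹⟩`. -/
theorem statement9
    (IwaA : M3 → M3) (hIwa : IsIwasawaA IwaA)
    (g n a k : M3) (hg : g.det = 1)
    (hn : isUnip n) (ha : isPosDiag a) (hk : isSO k) (hdec : g = n * a * k)
    (H₁ H₂ : M3) (hH₁ : isTDiag H₁) (hH₂ : isTDiag H₂) :
    HasDerivAt (fun s : ℝ => killing H₁ (IwaA (g * NormedSpace.exp (s • H₂))))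
      (killing H₁ (k * H₂ * k⁻¹)) 0 := by
  -- notation
  have htrH1 : (H₁ 0 0) + (H₁ 1 1) + (H₁ 2 2) = 0 := by
    have := hH₁.2; rwa [Matrix.trace_fin_three] at this
  have htrH2 : (H₂ 0 0) + (H₂ 1 1) + (H₂ 2 2) = 0 := by
    have := hH₂.2; rwa [Matrix.trace_fin_three] at this
  -- exp of s • H₂ is diagonal
  have hexp : ∀ s : ℝ, NormedSpace.exp (s • H₂)
      = Matrix.diagonal (fun i => Real.exp (s * H₂ i i)) := by
    intro s
    rw [expDiag (s • H₂) (fun i j hij => by simp [Matrix.smul_apply, hH₂.1 i j hij])]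
    simp [Matrix.smul_apply]
  -- every g·exp(s•H₂) has det 1
  have hdet : ∀ s : ℝ, (g * NormedSpace.exp (s • H₂)).det = 1 := by
    intro s
    rw [Matrix.det_mul, hg, one_mul, hexp s, Matrix.det_diagonal]
    rw [Fin.prod_univ_three, ← Real.exp_add, ← Real.exp_add]
    have : s * H₂ 0 0 + s * H₂ 1 1 + s * H₂ 2 2 = 0 := by
      have : s * ((H₂ 0 0) + (H₂ 1 1) + (H₂ 2 2)) = 0 := by rw [htrH2]; ring
      linarith [this]
    rw [this, Real.exp_zero]
  -- abbreviations for the minors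
  set P : ℝ → M3 := fun s =>
    (g * NormedSpace.exp (s • H₂)) * (g * NormedSpace.exp (s • H₂))ᵀ with hP
  set F1 : ℝ → ℝ := fun s => P s 2 2 with hF1def
  set F2 : ℝ → ℝ := fun s => P s 1 1 * P s 2 2 - P s 1 2 * P s 2 1 with hF2def
  -- Step 2: the function in terms of logs of minors
  have hstep2 : ∀ s : ℝ, killing H₁ (IwaA (g * NormedSpace.exp (s • H₂)))
      = 3 * (((H₁ 2 2) - (H₁ 1 1)) * Real.log (F1 s) + ((H₁ 1 1) - (H₁ 0 0)) * Real.log (F2 s)) := by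
    intro s
    obtain ⟨hTD, n', k', hn', hk', hd⟩ := hIwa _ (hdet s)
    set A' : M3 := IwaA (g * NormedSpace.exp (s • H₂)) with hA'
    obtain ⟨e1, e2⟩ := keyA _ n' A' k' hn' hTD.1 hk'.1 hd
    have l1 : Real.log (F1 s) = 2 * A' 2 2 := by
      rw [hF1def]; simp only [hP]; rw [e1, Real.log_exp]
    have l2 : Real.log (F2 s) = 2 * (A' 1 1 + A' 2 2) := by
      rw [hF2def]; simp only [hP]; rw [e2, Real.log_exp]
    rw [l1, l2, killingOfDiag H₁ A' hH₁.1]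
    have htrA : A' 0 0 + A' 1 1 + A' 2 2 = 0 := by
      have := hTD.2; rwa [Matrix.trace_fin_three] at this
    have hA0 : A' 0 0 = -(A' 1 1 + A' 2 2) := by linarith
    rw [hA0]; ring
  -- Step 3: explicit formulas for F1, F2 via the given decomposition g = n a k
  set u : Fin 3 → Fin 3 → ℝ → ℝ := fun i j s =>
    k i 0 * k j 0 * Real.exp (2 * s * (H₂ 0 0)) + k i 1 * k j 1 * Real.exp (2 * s * (H₂ 1 1))
      + k i 2 * k j 2 * Real.exp (2 * s * (H₂ 2 2)) with hu
  have haT : aᵀ = a := by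
    ext i j
    by_cases hij : i = j
    · subst hij; simp
    · rw [Matrix.transpose_apply, ha.1 i j hij, ha.1 j i (Ne.symm hij)]
  have hPQ : ∀ s : ℝ, P s = n * (a * ((k *
      Matrix.diagonal (fun i => Real.exp (2 * s * H₂ i i))) * kᵀ) * a) * nᵀ := by
    intro s
    set E : M3 := Matrix.diagonal (fun i => Real.exp (2 * s * H₂ i i)) with hE
    set e : M3 := Matrix.diagonal (fun i => Real.exp (s * H₂ i i)) with he
    have het : eᵀ = e := Matrix.diagonal_transpose _
    have hee : e * e = E := by
      rw [he, hE, Matrix.diagonal_mul_diagonal]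
      have hsq : ∀ i : Fin 3, Real.exp (s * H₂ i i) * Real.exp (s * H₂ i i)
          = Real.exp (2 * s * H₂ i i) := fun i => by rw [← Real.exp_add]; ring_nf
      simp [hsq]
    rw [hP]
    simp only [hexp s, ← he, hdec]
    calc n * a * k * e * (n * a * k * e)ᵀ
        = n * (a * ((k * (e * eᵀ)) * kᵀ) * aᵀ) * nᵀ := by
          simp only [Matrix.transpose_mul]; noncomm_ring
      _ = n * (a * ((k * E) * kᵀ) * a) * nᵀ := by rw [het, hee, haT]
  have hQu : ∀ (s : ℝ) (i j : Fin 3),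
      (a * ((k * Matrix.diagonal (fun i => Real.exp (2 * s * H₂ i i))) * kᵀ) * a) i j
        = a i i * u i j s * a j j := by
    intro s i j
    have haD : a = Matrix.diagonal (fun i => a i i) := by
      ext i' j'
      by_cases hij : i' = j'
      · subst hij; simp
      · simp [Matrix.diagonal_apply_ne _ hij, ha.1 i' j' hij]
    conv_lhs => rw [haD]
    rw [Matrix.mul_diagonal, Matrix.diagonal_mul]
    congr 1
    rw [Matrix.mul_apply]
    simp only [Matrix.mul_diagonal, Matrix.transpose_apply]
    rw [Fin.sum_univ_three, hu]
    ring
  have hF1 : ∀ s : ℝ, F1 s = a 2 2 ^ 2 * u 2 2 s := by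
    intro s
    rw [hF1def]
    simp only [hPQ s]
    rw [(unipEntries n _ hn).1, hQu s 2 2]; ring
  have hF2 : ∀ s : ℝ, F2 s = (a 1 1 * a 2 2) ^ 2
      * (u 1 1 s * u 2 2 s - u 1 2 s * u 2 1 s) := by
    intro s
    rw [hF2def]
    simp only [hPQ s]
    rw [(unipEntries n _ hn).2, hQu s 1 1, hQu s 2 2, hQu s 1 2, hQu s 2 1]; ring
  -- orthogonality relations
  have hrow : ∀ i j : Fin 3, k i 0 * k j 0 + k i 1 * k j 1 + k i 2 * k j 2
      = (1 : M3) i j := by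
    intro i j
    have := congrFun (congrFun hk.1 i) j
    rw [Matrix.mul_apply, Fin.sum_univ_three] at this
    simpa [Matrix.transpose_apply] using this
  have hcol : ∀ m : Fin 3, k 0 m * k 0 m + k 1 m * k 1 m + k 2 m * k 2 m = 1 := by
    intro m
    have hk' : kᵀ * k = 1 := mul_eq_one_comm.mp hk.1
    have := congrFun (congrFun hk' m) m
    rw [Matrix.mul_apply, Fin.sum_univ_three] at this
    simpa [Matrix.transpose_apply] using this
  have hu0 : ∀ i j : Fin 3, u i j 0 = (1 : M3) i j := by
    intro i j
    rw [hu]; simp [hrow i j]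
  -- c i j = (k H₂ kᵀ) i j
  set c : Fin 3 → Fin 3 → ℝ := fun i j =>
    (H₂ 0 0) * (k i 0 * k j 0) + (H₂ 1 1) * (k i 1 * k j 1) + (H₂ 2 2) * (k i 2 * k j 2) with hc
  -- derivative of u i j at 0
  have hud : ∀ i j : Fin 3, HasDerivAt (u i j) (2 * c i j) 0 := by
    intro i j
    have hterm : ∀ (q r bb : ℝ), HasDerivAt (fun s : ℝ => q * r * Real.exp (2 * s * bb))
        (q * r * (2 * bb)) 0 := by
      intro q r bb
      have hd1 : HasDerivAt (fun s : ℝ => 2 * s * bb) (2 * bb) 0 := by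
        simpa using ((hasDerivAt_id (0:ℝ)).const_mul 2).mul_const bb
      have hd2 := hd1.exp
      simp only [mul_zero, zero_mul, Real.exp_zero, mul_one] at hd2
      simpa using hd2.const_mul (q * r)
    have := ((hterm (k i 0) (k j 0) (H₂ 0 0)).add (hterm (k i 1) (k j 1) (H₂ 1 1))).add
      (hterm (k i 2) (k j 2) (H₂ 2 2))
    rw [hu, hc]
    exact this.congr_deriv (by beta_reduce; ring)
  -- positivity
  have ha11 : (0:ℝ) < a 1 1 := ha.2.1 1
  have ha22 : (0:ℝ) < a 2 2 := ha.2.1 2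
  have hF10 : F1 0 = a 2 2 ^ 2 := by rw [hF1 0, hu0 2 2]; simp
  have hF20 : F2 0 = (a 1 1 * a 2 2) ^ 2 := by
    rw [hF2 0, hu0 1 1, hu0 2 2, hu0 1 2, hu0 2 1]; simp
  have hF1pos : (0:ℝ) < F1 0 := by rw [hF10]; positivity
  have hF2pos : (0:ℝ) < F2 0 := by rw [hF20]; positivity
  -- derivatives of F1, F2 at 0
  have hF1d : HasDerivAt F1 (a 2 2 ^ 2 * (2 * c 2 2)) 0 := by
    have := (hud 2 2).const_mul (a 2 2 ^ 2)
    have heq : F1 = fun s => a 2 2 ^ 2 * u 2 2 s := funext hF1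
    rw [heq]; exact this
  have hF2d : HasDerivAt F2 ((a 1 1 * a 2 2) ^ 2 * (2 * c 1 1 + 2 * c 2 2)) 0 := by
    have hG : HasDerivAt (fun s => u 1 1 s * u 2 2 s - u 1 2 s * u 2 1 s)
        (2 * c 1 1 + 2 * c 2 2) 0 := by
      have h12 : u 1 2 0 = 0 := by rw [hu0 1 2]; simp [Matrix.one_apply]
      have h21 : u 2 1 0 = 0 := by rw [hu0 2 1]; simp [Matrix.one_apply]
      have h11 : u 1 1 0 = 1 := by rw [hu0 1 1]; simp
      have h22 : u 2 2 0 = 1 := by rw [hu0 2 2]; simp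
      have := ((hud 1 1).mul (hud 2 2)).sub ((hud 1 2).mul (hud 2 1))
      rw [h11, h22, h12, h21] at this
      exact this.congr_deriv (by ring)
    have := hG.const_mul ((a 1 1 * a 2 2) ^ 2)
    have heq : F2 = fun s => (a 1 1 * a 2 2) ^ 2
        * (u 1 1 s * u 2 2 s - u 1 2 s * u 2 1 s) := funext hF2
    rw [heq]; exact this
  -- assemble
  have hlog1 : HasDerivAt (fun s => Real.log (F1 s)) (2 * c 2 2) 0 := by
    have := hF1d.log (ne_of_gt hF1pos)
    convert this using 1
    rw [hF10]
    field_simp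
  have hlog2 : HasDerivAt (fun s => Real.log (F2 s))
      (2 * c 1 1 + 2 * c 2 2) 0 := by
    have := hF2d.log (ne_of_gt hF2pos)
    convert this using 1
    rw [hF20]
    field_simp
  have hmain : HasDerivAt
      (fun s : ℝ => 3 * (((H₁ 2 2) - (H₁ 1 1)) * Real.log (F1 s) + ((H₁ 1 1) - (H₁ 0 0)) * Real.log (F2 s)))
      (3 * (((H₁ 2 2) - (H₁ 1 1)) * (2 * c 2 2) + ((H₁ 1 1) - (H₁ 0 0)) * (2 * c 1 1 + 2 * c 2 2))) 0 :=
    (((hlog1.const_mul ((H₁ 2 2) - (H₁ 1 1))).add (hlog2.const_mul ((H₁ 1 1) - (H₁ 0 0)))).const_mul 3)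
  -- identify the derivative with the killing form value
  have hkinv : k⁻¹ = kᵀ := Matrix.inv_eq_right_inv hk.1
  have hckH : ∀ i j : Fin 3, (k * H₂ * kᵀ) i j = c i j := by
    intro i j
    have hkH : ∀ (i m : Fin 3), (k * H₂) i m = k i m * H₂ m m := by
      intro i m
      rw [Matrix.mul_apply, Fin.sum_univ_three]
      fin_cases m <;>
        simp [hH₂.1 0 1 (by decide), hH₂.1 0 2 (by decide), hH₂.1 1 0 (by decide),
          hH₂.1 1 2 (by decide), hH₂.1 2 0 (by decide), hH₂.1 2 1 (by decide)]
    rw [Matrix.mul_apply, Fin.sum_univ_three, hkH, hkH, hkH]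
    simp only [Matrix.transpose_apply, hc]
    ring
  have hcsum : c 0 0 + c 1 1 + c 2 2 = 0 := by
    have q0 := hcol 0
    have q1 := hcol 1
    have q2 := hcol 2
    rw [hc]
    beta_reduce
    linear_combination (H₂ 0 0) * q0 + (H₂ 1 1) * q1 + (H₂ 2 2) * q2 + htrH2
  have hval : killing H₁ (k * H₂ * k⁻¹)
      = 3 * (((H₁ 2 2) - (H₁ 1 1)) * (2 * c 2 2) + ((H₁ 1 1) - (H₁ 0 0)) * (2 * c 1 1 + 2 * c 2 2)) := by
    rw [hkinv, killingOfDiag H₁ _ hH₁.1, hckH 0 0, hckH 1 1, hckH 2 2]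
    have hc00 : c 0 0 = -(c 1 1 + c 2 2) := by linarith
    have hh0 : (H₁ 0 0) = -((H₁ 1 1) + (H₁ 2 2)) := by linarith
    rw [hc00, hh0]; ring
  rw [hval]
  have hfun : (fun s : ℝ => killing H₁ (IwaA (g * NormedSpace.exp (s • H₂))))
      = fun s : ℝ => 3 * (((H₁ 2 2) - (H₁ 1 1)) * Real.log (F1 s) + ((H₁ 1 1) - (H₁ 0 0)) * Real.log (F2 s)) :=
    funext hstep2
  rw [hfun]
  exact hmain

end
end
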